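/- For n ≥ 4 and 3 ≤ t ≤ n−1, if G is an n-vertex graph with minimum degree at least 1 and G is not the star K_{1,n-1}, then the number of independent sets of size t in G is strictly less than the number of independent sets of size t in K_{1,n-1}, which equals C(n-1, t). -/

import Mathlib

open Finset

/-- A finset of vertices is independent: no edge inside. -/
def SimpleGraph.IsIndepFinset {V : Type*} (G : SimpleGraph V) (s : Finset V) : Prop :=
  ∀ v ∈ s, ∀ w ∈ s, ¬ G.Adj v w

/-- `indepCount G t` = number of independent sets of size `t` in `G`. -/
noncomputable def indepCount {V : Type*} [Fintype V] (G : SimpleGraph V) (t : ℕ) : ℕ :=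
  Nat.card {s : Finset V // s.card = t ∧ G.IsIndepFinset s}

/-- `indepTotal G` = total number of independent sets in `G` (including ∅). -/
noncomputable def indepTotal {V : Type*} [Fintype V] (G : SimpleGraph V) : ℕ :=
  Nat.card {s : Finset V // G.IsIndepFinset s}

open Classical in
/-- The independence polynomial `P(G,x) = Σ_t i_t(G) xᵗ`. -/
noncomputable def indPoly {V : Type*} [Fintype V] (G : SimpleGraph V) (x : ℝ) : ℝ :=
  ∑ s ∈ Finset.univ.filter (fun s : Finset V => G.IsIndepFinset s), x ^ s.card

theorem star_maximizes_fixed_size {V : Type*} [Fintype V] [DecidableEq V]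
    (G : SimpleGraph V) [DecidableRel G.Adj] (n t : ℕ)
    (hn : 4 ≤ n) (hcard : Fintype.card V = n) (ht : 3 ≤ t) (ht' : t ≤ n - 1)
    (hdeg : ∀ v : V, 1 ≤ G.degree v)
    (hne : ¬ Nonempty (G ≃g completeBipartiteGraph (Fin 1) (Fin (n - 1)))) :
    indepCount G t < (n - 1).choose t := by
  classical
  have hVne : Nonempty V := by
    rw [← Fintype.card_pos_iff, hcard]; omega
  -- choose a vertex of maximum degree
  obtain ⟨v₀, -, hv₀max⟩ := Finset.exists_max_image (univ : Finset V)
    (fun v => G.degree v) (univ_nonempty)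
  -- neighbor choice function
  have hnbr : ∀ v : V, ∃ u, G.Adj v u := by
    intro v
    have h1 : 0 < (G.neighborFinset v).card := by
      rw [G.card_neighborFinset_eq_degree]; exact hdeg v
    obtain ⟨u, hu⟩ := Finset.card_pos.mp h1
    exact ⟨u, by rwa [SimpleGraph.mem_neighborFinset] at hu⟩
  choose nb hnb using hnbr
  -- the star contradiction
  have hstar : (∀ a b : V, G.Adj a b → a = v₀ ∨ b = v₀) → False := by
    intro hall
    have hadj : ∀ v : V, v ≠ v₀ → G.Adj v₀ v := by
      intro v hv
      rcases hall v (nb v) (hnb v) with h | h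
      · exact absurd h hv
      · rw [← h]; exact (hnb v).symm
    have hc1 : Fintype.card {v : V // v = v₀} = 1 := Fintype.card_subtype_eq v₀
    have hc2 : Fintype.card {v : V // ¬ v = v₀} = n - 1 := by
      rw [Fintype.card_subtype_compl, hc1, hcard]
    let e : V ≃ (Fin 1 ⊕ Fin (n - 1)) :=
      (Equiv.sumCompl (fun v : V => v = v₀)).symm.trans
        (Equiv.sumCongr (Fintype.equivFinOfCardEq hc1) (Fintype.equivFinOfCardEq hc2))
    have hleft : ∀ a : V, (e a).isLeft = true ↔ a = v₀ := by
      intro a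
      by_cases h : a = v₀
      · simp only [e, Equiv.trans_apply, Equiv.sumCompl_symm_apply_of_pos h]
        simp [h]
      · simp only [e, Equiv.trans_apply, Equiv.sumCompl_symm_apply_of_neg h]
        simp [h]
    have hright : ∀ a : V, (e a).isRight = true ↔ a ≠ v₀ := by
      intro a
      constructor
      · intro h hav
        rw [← hleft a] at hav
        cases he : e a
        · rw [he] at h; simp at h
        · rw [he] at hav; simp at hav
      · intro h
        cases he : e a
        · exact absurd ((hleft a).mp (by simp [he])) h
        · simp [he]
    have hiso : G ≃g completeBipartiteGraph (Fin 1) (Fin (n - 1)) := by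
      refine ⟨e, ?_⟩
      intro a b
      simp only [completeBipartiteGraph_adj]
      constructor
      · rintro (⟨h1, h2⟩ | ⟨h1, h2⟩)
        · have ha : a = v₀ := (hleft a).mp h1
          have hb : b ≠ v₀ := (hright b).mp h2
          rw [ha]; exact hadj b hb
        · have hb : b = v₀ := (hleft b).mp h2
          have ha : a ≠ v₀ := (hright a).mp h1
          rw [hb]; exact (hadj a ha).symm
      · intro hab
        rcases hall a b hab with rfl | rfl
        · left
          refine ⟨(hleft a).mpr rfl, ?_⟩
          exact (hright b).mpr (fun h => G.irrefl (h ▸ hab))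
        · right
          refine ⟨?_, (hleft b).mpr rfl⟩
          exact (hright a).mpr (fun h => G.irrefl ((h ▸ hab : G.Adj b b)))
    exact hne ⟨hiso⟩
  -- counting setup
  have hcount : indepCount G t
      = (univ.filter (fun s : Finset V => s.card = t ∧ G.IsIndepFinset s)).card := by
    rw [indepCount, Nat.card_eq_fintype_card, Fintype.card_subtype]
  set T : Finset (Finset V) := Finset.powersetCard t (univ.erase v₀) with hT
  have hTcard : T.card = (n-1).choose t := by
    rw [hT, Finset.card_powersetCard, card_erase_of_mem (mem_univ v₀), card_univ, hcard]
  set Xf : Finset (Finset V) := T.filter (fun S => G.IsIndepFinset S) with hXf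
  set Df : Finset (Finset V) := T.filter (fun S => ¬ G.IsIndepFinset S) with hDf
  have hsplitT : Xf.card + Df.card = T.card :=
    Finset.card_filter_add_card_filter_not _
  set Yf : Finset (Finset V) :=
    univ.filter (fun S : Finset V => (S.card = t ∧ G.IsIndepFinset S) ∧ v₀ ∈ S) with hYf
  have hcount2 : indepCount G t = Xf.card + Yf.card := by
    rw [hcount]
    rw [← Finset.card_filter_add_card_filter_not
      (s := univ.filter (fun s : Finset V => s.card = t ∧ G.IsIndepFinset s))
      (p := fun S => v₀ ∉ S)]
    congr 1
    · congr 1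
      rw [filter_filter, hXf, hT]
      ext S
      simp only [mem_filter, mem_univ, true_and, Finset.mem_powersetCard]
      constructor
      · rintro ⟨⟨hc, hi⟩, hv⟩
        refine ⟨⟨fun a ha => mem_erase.mpr ⟨?_, mem_univ a⟩, hc⟩, hi⟩
        rintro rfl; exact hv ha
      · rintro ⟨⟨hsub, hc⟩, hi⟩
        exact ⟨⟨hc, hi⟩, fun hv => (mem_erase.mp (hsub hv)).1 rfl⟩
    · rw [filter_filter, hYf]
      congr 1
      ext S
      simp only [mem_filter, mem_univ, true_and, not_not]
  -- building t-sets avoiding v₀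
  have hbuild : ∀ s : Finset V, s ⊆ univ.erase v₀ → s.card ≤ t →
      ∃ U : Finset V, s ⊆ U ∧ U ∈ T := by
    intro s hs hst
    have hle : t - s.card ≤ ((univ.erase v₀) \ s).card := by
      have h1 : (univ.erase v₀).card - s.card ≤ ((univ.erase v₀) \ s).card :=
        le_card_sdiff s _
      have h2 : (univ.erase v₀).card = n - 1 := by
        rw [card_erase_of_mem (mem_univ v₀), card_univ, hcard]
      omega
    obtain ⟨R, hR1, hR2⟩ := Finset.exists_subset_card_eq hle
    have hdisj : Disjoint s R := by
      rw [Finset.disjoint_left]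
      intro a ha haR
      exact (Finset.mem_sdiff.mp (hR1 haR)).2 ha
    refine ⟨s ∪ R, subset_union_left, ?_⟩
    rw [hT, Finset.mem_powersetCard]
    constructor
    · exact union_subset hs (hR1.trans (sdiff_subset))
    · rw [card_union_of_disjoint hdisj, hR2]; omega
  -- the triple set
  set P3 : Finset (Finset V × V × V) := univ.filter
    (fun τ => (G.IsIndepFinset τ.1 ∧ τ.1.card = t ∧ v₀ ∈ τ.1) ∧
      τ.2.1 ∈ τ.1 ∧ τ.2.1 ≠ v₀ ∧ G.Adj τ.2.1 τ.2.2) with hP3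
  have hmemP3 : ∀ τ : Finset V × V × V, τ ∈ P3 ↔
      ((G.IsIndepFinset τ.1 ∧ τ.1.card = t ∧ v₀ ∈ τ.1) ∧
      τ.2.1 ∈ τ.1 ∧ τ.2.1 ≠ v₀ ∧ G.Adj τ.2.1 τ.2.2) := by
    intro τ; rw [hP3, mem_filter]; simp
  have hP3w : ∀ τ ∈ P3, τ.2.2 ∉ τ.1 ∧ τ.2.2 ≠ v₀ := by
    intro τ hτ
    rw [hmemP3] at hτ
    obtain ⟨⟨hi, hc, hv⟩, hx, hxne, hadj⟩ := hτ
    constructor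
    · intro hw; exact hi _ hx _ hw hadj
    · rintro rfl; exact hi _ hx _ hv hadj
  have hrec : ∀ τ ∈ P3, τ.1 = insert v₀ ((insert τ.2.2 (τ.1.erase v₀)).erase τ.2.2) := by
    intro τ hτ
    have hw : τ.2.2 ∉ τ.1.erase v₀ := fun h => (hP3w τ hτ).1 (mem_of_mem_erase h)
    rw [Finset.erase_insert hw, Finset.insert_erase ((hmemP3 τ).mp hτ).1.2.2]
  have hfacts : ∀ (U : Finset V) (τ : Finset V × V × V), τ ∈ P3 →
      insert τ.2.2 (τ.1.erase v₀) = U →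
      τ.1 = insert v₀ (U.erase τ.2.2) ∧ τ.2.2 ∈ U ∧ τ.2.1 ∈ U.erase τ.2.2 := by
    intro U τ hτ hU
    obtain ⟨⟨hi, hc, hv⟩, hx, hxne, hadj⟩ := (hmemP3 τ).mp hτ
    refine ⟨by rw [← hU]; exact hrec τ hτ, ?_, ?_⟩
    · rw [← hU]; exact mem_insert_self _ _
    · rw [← hU]
      have hxw : τ.2.1 ≠ τ.2.2 := G.ne_of_adj hadj
      have : τ.2.1 ∈ insert τ.2.2 (τ.1.erase v₀) :=
        mem_insert.mpr (Or.inr (mem_erase.mpr ⟨hxne, hx⟩))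
      exact mem_erase.mpr ⟨hxw, this⟩
  have hkey : ∀ τ ∈ P3, ∀ τ' ∈ P3,
      insert τ.2.2 (τ.1.erase v₀) = insert τ'.2.2 (τ'.1.erase v₀) →
      τ.2.1 = τ'.2.1 → τ = τ' := by
    rintro ⟨S, x, w⟩ hτ ⟨S', x', w'⟩ hτ' hU hx
    simp only at hU hx ⊢
    subst hx
    have h1 := (hmemP3 _).mp hτ
    have h1' := (hmemP3 _).mp hτ'
    have hww : w = w' := by
      by_contra hww
      have hwU : w ∈ insert w' (S'.erase v₀) := by
        rw [← hU]; exact mem_insert_self _ _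
      have hwS' : w ∈ S' := by
        rcases mem_insert.mp hwU with h | h
        · exact absurd h hww
        · exact mem_of_mem_erase h
      exact h1'.1.1 _ h1'.2.1 _ hwS' h1.2.2.2
    subst hww
    have hSS : S = S' := by
      have e1 := hrec _ hτ
      have e2 := hrec _ hτ'
      simp only at e1 e2
      rw [e1, e2, hU]
    subst hSS
    rfl
  have hg : ∀ τ ∈ P3, insert τ.2.2 (τ.1.erase v₀) ∈ Df := by
    intro τ hτ
    obtain ⟨⟨hi, hc, hv⟩, hx, hxne, hadj⟩ := (hmemP3 τ).mp hτ
    obtain ⟨hwS, hwv⟩ := hP3w τ hτ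
    rw [hDf, mem_filter, hT, Finset.mem_powersetCard]
    refine ⟨⟨?_, ?_⟩, ?_⟩
    · intro a ha
      rcases mem_insert.mp ha with rfl | ha
      · exact mem_erase.mpr ⟨hwv, mem_univ _⟩
      · exact mem_erase.mpr ⟨(mem_erase.mp ha).1, mem_univ _⟩
    · rw [card_insert_of_notMem (fun h => hwS (mem_of_mem_erase h)),
        card_erase_of_mem hv, hc]
      omega
    · intro hind
      have hxm : τ.2.1 ∈ insert τ.2.2 (τ.1.erase v₀) :=
        mem_insert.mpr (Or.inr (mem_erase.mpr ⟨hxne, hx⟩))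
      exact hind _ hxm _ (mem_insert_self _ _) hadj
  -- lower bound
  have hlow : Yf.card * (t - 1) ≤ P3.card := by
    have hfib := Finset.card_eq_sum_card_fiberwise (f := fun τ : Finset V × V × V => τ.1)
      (s := P3) (t := Yf) (fun τ hτ => by
        obtain ⟨⟨hi, hc, hv⟩, hx, hxne, hadj⟩ := (hmemP3 τ).mp hτ
        rw [hYf, mem_coe, mem_filter]; exact ⟨mem_univ _, ⟨hc, hi⟩, hv⟩)
    rw [hfib]
    have hfl : ∀ S ∈ Yf, t - 1 ≤ (P3.filter (fun τ => τ.1 = S)).card := by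
      intro S hS
      obtain ⟨-, ⟨hc, hi⟩, hv⟩ := mem_filter.mp hS
      have hinj : ∀ x ∈ S.erase v₀, (S, x, nb x) ∈ P3.filter (fun τ => τ.1 = S) := by
        intro x hx
        obtain ⟨hxv, hxS⟩ := mem_erase.mp hx
        rw [mem_filter, hmemP3]
        exact ⟨⟨⟨hi, hc, hv⟩, hxS, hxv, hnb x⟩, rfl⟩
      have := Finset.card_le_card_of_injOn (fun x => (S, x, nb x)) hinj
        (fun a _ b _ hab => by
          have : (a, nb a) = (b, nb b) := congrArg Prod.snd hab
          exact congrArg Prod.fst this)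
      rw [card_erase_of_mem hv, hc] at this
      exact this
    calc Yf.card * (t - 1) = Yf.card • (t - 1) := by rw [smul_eq_mul]
      _ ≤ ∑ S ∈ Yf, (P3.filter (fun τ => τ.1 = S)).card :=
          Finset.card_nsmul_le_sum _ _ _ hfl
  have hupdecomp : P3.card
      = ∑ U ∈ Df, (P3.filter (fun τ => insert τ.2.2 (τ.1.erase v₀) = U)).card :=
    Finset.card_eq_sum_card_fiberwise (fun τ hτ => hg τ hτ)
  -- general fiber bound
  have hfib_le : ∀ U ∈ Df,
      (P3.filter (fun τ => insert τ.2.2 (τ.1.erase v₀) = U)).card ≤ t - 1 := by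
    intro U hU
    rcases (P3.filter (fun τ => insert τ.2.2 (τ.1.erase v₀) = U)).eq_empty_or_nonempty with
      he | ⟨τ₁, hτ₁⟩
    · rw [he]; simp
    have hUcard : U.card = t := (Finset.mem_powersetCard.mp (mem_filter.mp hU).1).2
    obtain ⟨hτ₁P, hτ₁U⟩ := mem_filter.mp hτ₁
    obtain ⟨hS₁, hw₁U, hx₁Ue⟩ := hfacts U τ₁ hτ₁P hτ₁U
    have hx₁U : τ₁.2.1 ∈ U := mem_of_mem_erase hx₁Ue
    have hadj₁ : G.Adj τ₁.2.1 τ₁.2.2 := ((hmemP3 τ₁).mp hτ₁P).2.2.2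
    by_cases hsw : ∃ τs ∈ P3.filter (fun τ => insert τ.2.2 (τ.1.erase v₀) = U),
        τs.2.1 = τ₁.2.2
    · obtain ⟨τs, hτs, hxs⟩ := hsw
      obtain ⟨hτsP, hτsU⟩ := mem_filter.mp hτs
      obtain ⟨hSs, hwsU, hxsUe⟩ := hfacts U τs hτsP hτsU
      have hisS : G.IsIndepFinset τs.1 := ((hmemP3 τs).mp hτsP).1.1
      have hxs_mem : τs.2.1 ∈ τs.1 := ((hmemP3 τs).mp hτsP).2.1
      have hws : τs.2.2 = τ₁.2.1 := by
        by_contra hne2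
        have hx₁Ss : τ₁.2.1 ∈ τs.1 := by
          rw [hSs]
          exact mem_insert.mpr (Or.inr (mem_erase.mpr ⟨fun h => hne2 h.symm, hx₁U⟩))
        have hw₁Ss : τ₁.2.2 ∈ τs.1 := hxs ▸ hxs_mem
        exact hisS _ hx₁Ss _ hw₁Ss hadj₁
      have hsub : ∀ τ' ∈ P3.filter (fun τ => insert τ.2.2 (τ.1.erase v₀) = U),
          τ' = τ₁ ∨ τ' = τs := by
        intro τ' hτ'
        obtain ⟨hτ'P, hτ'U⟩ := mem_filter.mp hτ'
        obtain ⟨hS', hw'U, hx'Ue⟩ := hfacts U τ' hτ'P hτ'U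
        have hx'U : τ'.2.1 ∈ U := mem_of_mem_erase hx'Ue
        have hadj' : G.Adj τ'.2.1 τ'.2.2 := ((hmemP3 τ').mp hτ'P).2.2.2
        have hi' : G.IsIndepFinset τ'.1 := ((hmemP3 τ').mp hτ'P).1.1
        have hi₁ : G.IsIndepFinset τ₁.1 := ((hmemP3 τ₁).mp hτ₁P).1.1
        have hx₁mem : τ₁.2.1 ∈ τ₁.1 := ((hmemP3 τ₁).mp hτ₁P).2.1
        have hwcase : τ'.2.2 = τ₁.2.2 ∨ τ'.2.2 = τ₁.2.1 := by
          by_contra hcc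
          push_neg at hcc
          obtain ⟨hc1, hc2⟩ := hcc
          have hx₁S' : τ₁.2.1 ∈ τ'.1 := by
            rw [hS']
            exact mem_insert.mpr (Or.inr (mem_erase.mpr ⟨fun h => hc2 h.symm, hx₁U⟩))
          have hw₁S' : τ₁.2.2 ∈ τ'.1 := by
            rw [hS']
            exact mem_insert.mpr (Or.inr (mem_erase.mpr ⟨fun h => hc1 h.symm, hw₁U⟩))
          exact hi' _ hx₁S' _ hw₁S' hadj₁
        rcases hwcase with hcase | hcase
        · left
          refine hkey τ' hτ'P τ₁ hτ₁P (by rw [hτ'U, hτ₁U]) ?_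
          by_contra hxx
          have hx'Ss : τ'.2.1 ∈ τs.1 := by
            rw [hSs, hws]
            exact mem_insert.mpr (Or.inr (mem_erase.mpr ⟨hxx, hx'U⟩))
          have hw₁Ss : τ₁.2.2 ∈ τs.1 := hxs ▸ hxs_mem
          have : G.Adj τ'.2.1 τ₁.2.2 := hcase ▸ hadj'
          exact hisS _ hx'Ss _ hw₁Ss this
        · right
          refine hkey τ' hτ'P τs hτsP (by rw [hτ'U, hτsU]) ?_
          rw [hxs]
          by_contra hxx
          have hx'S₁ : τ'.2.1 ∈ τ₁.1 := by
            rw [hS₁]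
            exact mem_insert.mpr (Or.inr (mem_erase.mpr ⟨hxx, hx'U⟩))
          have : G.Adj τ'.2.1 τ₁.2.1 := hcase ▸ hadj'
          exact hi₁ _ hx'S₁ _ hx₁mem this
      calc (P3.filter (fun τ => insert τ.2.2 (τ.1.erase v₀) = U)).card
          ≤ ({τ₁, τs} : Finset (Finset V × V × V)).card := by
            apply card_le_card
            intro τ' hτ'
            rcases hsub τ' hτ' with rfl | rfl <;> simp
        _ ≤ 2 := by
            apply le_trans (card_insert_le _ _)
            simp
        _ ≤ t - 1 := by omega
    · push_neg at hsw
      have hmaps : ∀ τ ∈ P3.filter (fun τ => insert τ.2.2 (τ.1.erase v₀) = U),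
          τ.2.1 ∈ U.erase τ₁.2.2 := by
        intro τ hτ
        obtain ⟨hτP, hτU⟩ := mem_filter.mp hτ
        obtain ⟨hS, hwU, hxUe⟩ := hfacts U τ hτP hτU
        exact mem_erase.mpr ⟨hsw τ hτ, mem_of_mem_erase hxUe⟩
      have hinj : (P3.filter (fun τ => insert τ.2.2 (τ.1.erase v₀) = U)).card
          ≤ (U.erase τ₁.2.2).card := by
        apply Finset.card_le_card_of_injOn (fun τ : Finset V × V × V => τ.2.1) hmaps
        intro a ha b hb hab
        simp only [Finset.coe_filter, Set.mem_setOf_eq] at ha hb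
        exact hkey a ha.1 b hb.1 (by rw [ha.2, hb.2]) hab
      rw [card_erase_of_mem hw₁U, hUcard] at hinj
      exact hinj
  -- main inequality
  have hYD : Yf.card < Df.card := by
    by_cases hY0 : Yf.card = 0
    · -- just need one dependent set avoiding v₀
      by_cases hall : ∀ a b : V, G.Adj a b → a = v₀ ∨ b = v₀
      · exact absurd hall (fun h => (hstar h).elim)
      push_neg at hall
      obtain ⟨a, b, hab, ha, hb⟩ := hall
      have hsub : ({a, b} : Finset V) ⊆ univ.erase v₀ := by
        intro c hc
        rcases mem_insert.mp hc with rfl | hc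
        · exact mem_erase.mpr ⟨ha, mem_univ _⟩
        · rw [mem_singleton.mp hc]; exact mem_erase.mpr ⟨hb, mem_univ _⟩
      obtain ⟨U, hsU, hUT⟩ := hbuild {a, b} hsub
        (le_trans (card_insert_le _ _) (by simp; omega))
      have hUDf : U ∈ Df := by
        rw [hDf, mem_filter]
        refine ⟨hUT, fun hind => ?_⟩
        exact hind a (hsU (mem_insert_self _ _)) b
          (hsU (mem_insert.mpr (Or.inr (mem_singleton_self _)))) hab
      have := card_pos.mpr ⟨U, hUDf⟩
      omega
    · -- Yf nonempty: find a special dependent set with small fiber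
      have hYpos : 0 < Yf.card := Nat.pos_of_ne_zero hY0
      -- find U* in Df whose fiber has size ≤ t - 2
      have hUstar : ∃ Ust ∈ Df,
          (P3.filter (fun τ => insert τ.2.2 (τ.1.erase v₀) = Ust)).card ≤ t - 2 := by
        by_cases hA : ∃ x y : V, G.Adj x y ∧ x ≠ v₀ ∧ y ≠ v₀ ∧ G.Adj v₀ x
        · obtain ⟨x, y, hxy, hx, hy, hvx⟩ := hA
          by_cases hz : ∃ z : V, z ≠ v₀ ∧ z ≠ x ∧ ¬ G.Adj x z
          · obtain ⟨z, hz1, hz2, hz3⟩ := hz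
            have hzy : z ≠ y := by rintro rfl; exact hz3 hxy
            have hsub : ({x, y, z} : Finset V) ⊆ univ.erase v₀ := by
              intro c hc
              simp only [mem_insert, mem_singleton] at hc
              rcases hc with rfl | rfl | rfl
              · exact mem_erase.mpr ⟨hx, mem_univ _⟩
              · exact mem_erase.mpr ⟨hy, mem_univ _⟩
              · exact mem_erase.mpr ⟨hz1, mem_univ _⟩
            obtain ⟨U, hsU, hUT⟩ := hbuild {x, y, z} hsub
              (by
                apply le_trans (card_insert_le _ _)
                apply le_trans (Nat.add_le_add_right (card_insert_le _ _) 1)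
                simp; omega)
            have hxU : x ∈ U := hsU (by simp)
            have hyU : y ∈ U := hsU (by simp)
            have hzU : z ∈ U := hsU (by simp)
            have hUcard : U.card = t := (Finset.mem_powersetCard.mp (hT ▸ hUT)).2
            have hUDf : U ∈ Df := by
              rw [hDf, mem_filter]
              exact ⟨hUT, fun hind => hind x hxU y hyU hxy⟩
            refine ⟨U, hUDf, ?_⟩
            -- all fiber elements have w = x
            have hwx : ∀ τ ∈ P3.filter (fun τ => insert τ.2.2 (τ.1.erase v₀) = U),
                τ.2.2 = x := by
              intro τ hτ
              obtain ⟨hτP, hτU⟩ := mem_filter.mp hτ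
              obtain ⟨hS, hwU, hxUe⟩ := hfacts U τ hτP hτU
              by_contra hc
              have hxS : x ∈ τ.1 := by
                rw [hS]
                exact mem_insert.mpr (Or.inr (mem_erase.mpr ⟨fun h => hc h.symm, hxU⟩))
              have hvS : v₀ ∈ τ.1 := ((hmemP3 τ).mp hτP).1.2.2
              exact ((hmemP3 τ).mp hτP).1.1 v₀ hvS x hxS hvx
            have hmaps : ∀ τ ∈ P3.filter (fun τ => insert τ.2.2 (τ.1.erase v₀) = U),
                τ.2.1 ∈ (U.erase x).erase z := by
              intro τ hτ
              obtain ⟨hτP, hτU⟩ := mem_filter.mp hτ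
              obtain ⟨hS, hwU, hxUe⟩ := hfacts U τ hτP hτU
              have hwxτ := hwx τ hτ
              have hadjτ : G.Adj τ.2.1 x := hwxτ ▸ ((hmemP3 τ).mp hτP).2.2.2
              refine mem_erase.mpr ⟨?_, by rw [← hwxτ]; exact hxUe⟩
              rintro rfl
              exact hz3 hadjτ.symm
            have hinj : (P3.filter (fun τ => insert τ.2.2 (τ.1.erase v₀) = U)).card
                ≤ ((U.erase x).erase z).card := by
              apply Finset.card_le_card_of_injOn (fun τ : Finset V × V × V => τ.2.1) hmaps
              intro a2 ha2 b2 hb2 hab2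
              simp only [Finset.coe_filter, Set.mem_setOf_eq] at ha2 hb2
              exact hkey a2 ha2.1 b2 hb2.1 (by rw [ha2.2, hb2.2]) hab2
            have hzUx : z ∈ U.erase x := mem_erase.mpr ⟨hz2, hzU⟩
            rw [card_erase_of_mem hzUx, card_erase_of_mem hxU, hUcard] at hinj
            exact le_trans hinj (by omega)
          · -- x is adjacent to everything except itself: contradiction with Yf nonempty
            exfalso
            push_neg at hz
            have hdegx : G.neighborFinset x = univ.erase x := by
              apply Finset.eq_of_subset_of_card_le
              · intro u hu
                rw [SimpleGraph.mem_neighborFinset] at hu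
                exact mem_erase.mpr ⟨fun h => G.irrefl (h ▸ hu), mem_univ _⟩
              · have hsub2 : univ.erase x ⊆ G.neighborFinset x := by
                  intro u hu
                  obtain ⟨hux, -⟩ := mem_erase.mp hu
                  rw [SimpleGraph.mem_neighborFinset]
                  by_cases huv : u = v₀
                  · rw [huv]; exact hvx.symm
                  · exact hz u huv hux
                exact card_le_card hsub2
            have hdx : G.degree x = n - 1 := by
              rw [← G.card_neighborFinset_eq_degree, hdegx,
                card_erase_of_mem (mem_univ x), card_univ, hcard]
            have hdv : G.degree v₀ = n - 1 := by
              have h1 := hv₀max x (mem_univ x)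
              have h2 : G.degree v₀ ≤ n - 1 := by
                have := G.degree_lt_card_verts v₀
                rw [hcard] at this
                omega
              omega
            have hnbv : G.neighborFinset v₀ = univ.erase v₀ := by
              apply Finset.eq_of_subset_of_card_le
              · intro u hu
                rw [SimpleGraph.mem_neighborFinset] at hu
                exact mem_erase.mpr ⟨fun h => G.irrefl (h ▸ hu), mem_univ _⟩
              · rw [card_erase_of_mem (mem_univ v₀), card_univ, hcard,
                  G.card_neighborFinset_eq_degree, hdv]
            obtain ⟨S₀, hS₀⟩ := card_pos.mp hYpos
            obtain ⟨-, ⟨hc0, hi0⟩, hv0⟩ := mem_filter.mp hS₀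
            have hS0e : 0 < (S₀.erase v₀).card := by
              rw [card_erase_of_mem hv0, hc0]; omega
            obtain ⟨s₁, hs₁⟩ := card_pos.mp hS0e
            obtain ⟨hs₁v, hs₁S⟩ := mem_erase.mp hs₁
            have : G.Adj v₀ s₁ := by
              rw [← SimpleGraph.mem_neighborFinset, hnbv]
              exact mem_erase.mpr ⟨hs₁v, mem_univ _⟩
            exact hi0 v₀ hv0 s₁ hs₁S this
        · -- case B: neighbors of v₀ have no other edges
          push_neg at hA
          set u₀ := nb v₀ with hu₀def
          have hu₀adj : G.Adj v₀ u₀ := hnb v₀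
          have hu₀ne : u₀ ≠ v₀ := fun h => G.irrefl (h ▸ hu₀adj)
          have hu0only : ∀ y : V, G.Adj u₀ y → y = v₀ := by
            intro y hy
            by_contra hyv
            exact hA u₀ y hy hu₀ne hyv hu₀adj
          by_cases hall : ∀ a b : V, G.Adj a b → a = v₀ ∨ b = v₀
          · exact absurd hall (fun h => (hstar h).elim)
          push_neg at hall
          obtain ⟨m, m', hmm', hm, hm'⟩ := hall
          have hum : u₀ ≠ m := by
            rintro rfl
            exact hm' (hu0only m' hmm')
          have hum' : u₀ ≠ m' := by
            rintro rfl
            exact hm (hu0only m hmm'.symm)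
          have hsub : ({u₀, m, m'} : Finset V) ⊆ univ.erase v₀ := by
            intro c hc
            simp only [mem_insert, mem_singleton] at hc
            rcases hc with rfl | rfl | rfl
            · exact mem_erase.mpr ⟨hu₀ne, mem_univ _⟩
            · exact mem_erase.mpr ⟨hm, mem_univ _⟩
            · exact mem_erase.mpr ⟨hm', mem_univ _⟩
          obtain ⟨U, hsU, hUT⟩ := hbuild {u₀, m, m'} hsub
            (by
              apply le_trans (card_insert_le _ _)
              apply le_trans (Nat.add_le_add_right (card_insert_le _ _) 1)
              simp; omega)
          have hu₀U : u₀ ∈ U := hsU (by simp)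
          have hmU : m ∈ U := hsU (by simp)
          have hm'U : m' ∈ U := hsU (by simp)
          have hUDf : U ∈ Df := by
            rw [hDf, mem_filter]
            exact ⟨hUT, fun hind => hind m hmU m' hm'U hmm'⟩
          refine ⟨U, hUDf, ?_⟩
          have hempty : P3.filter (fun τ => insert τ.2.2 (τ.1.erase v₀) = U) = ∅ := by
            rw [Finset.eq_empty_iff_forall_notMem]
            intro τ hτ
            obtain ⟨hτP, hτU⟩ := mem_filter.mp hτ
            obtain ⟨hS, hwU, hxUe⟩ := hfacts U τ hτP hτU
            by_cases hwu : τ.2.2 = u₀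
            · have hadjτ : G.Adj τ.2.1 u₀ := hwu ▸ ((hmemP3 τ).mp hτP).2.2.2
              exact ((hmemP3 τ).mp hτP).2.2.1 (hu0only τ.2.1 hadjτ.symm ▸ rfl)
            · have hu₀S : u₀ ∈ τ.1 := by
                rw [hS]
                exact mem_insert.mpr (Or.inr (mem_erase.mpr ⟨fun h => hwu h.symm, hu₀U⟩))
              have hvS : v₀ ∈ τ.1 := ((hmemP3 τ).mp hτP).1.2.2
              exact ((hmemP3 τ).mp hτP).1.1 v₀ hvS u₀ hu₀S hu₀adj
          rw [hempty]
          simp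
      obtain ⟨Ust, hUstDf, hfibstar⟩ := hUstar
      have hDpos : 0 < Df.card := card_pos.mpr ⟨Ust, hUstDf⟩
      have hsum_le : ∑ U ∈ Df, (P3.filter (fun τ => insert τ.2.2 (τ.1.erase v₀) = U)).card
          ≤ (t - 2) + (Df.card - 1) * (t - 1) := by
        rw [← Finset.add_sum_erase Df _ hUstDf]
        apply Nat.add_le_add hfibstar
        calc ∑ U ∈ Df.erase Ust,
              (P3.filter (fun τ => insert τ.2.2 (τ.1.erase v₀) = U)).card
            ≤ (Df.erase Ust).card • (t - 1) :=
              Finset.sum_le_card_nsmul _ _ _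
                (fun U hU => hfib_le U (mem_of_mem_erase hU))
          _ = (Df.card - 1) * (t - 1) := by
              rw [card_erase_of_mem hUstDf, smul_eq_mul]
      have hchain : Yf.card * (t - 1) ≤ (t - 2) + (Df.card - 1) * (t - 1) :=
        le_trans hlow (le_trans (le_of_eq hupdecomp) hsum_le)
      by_contra hcon
      push_neg at hcon
      have h1 : Df.card * (t - 1) ≤ Yf.card * (t - 1) :=
        Nat.mul_le_mul_right _ hcon
      have h2 : Df.card * (t - 1) = (Df.card - 1) * (t - 1) + (t - 1) := by
        have h5 : Df.card = (Df.card - 1) + 1 := by omega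
        nth_rewrite 1 [h5]
        rw [Nat.add_mul, one_mul]
      have h3 : (Df.card - 1) * (t - 1) + (t - 1) ≤ (t - 2) + (Df.card - 1) * (t - 1) := by
        rw [← h2]; exact le_trans h1 hchain
      rw [add_comm (t - 2) _] at h3
      have h4 : t - 1 ≤ t - 2 := Nat.le_of_add_le_add_left h3
      omega
  rw [hcount2, ← hTcard, ← hsplitT]
  exact Nat.add_lt_add_left hYD _
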